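/- If 𝔥 is a fat Hoffman graph (with at least one slim vertex) whose smallest eigenvalue satisfies λ_min(𝔥) > −3, then the smallest eigenvalue of its special graph satisfies λ_min(S(𝔥)) ≥ λ_min(𝔥) + 1. -/

import Mathlib

/-- A Hoffman graph: a finite simple graph whose vertices are labeled slim or fat,
such that fat vertices are pairwise non-adjacent and every fat vertex is adjacent
to at least one slim vertex. -/
structure HoffmanGraph (V : Type*) where
  adj : V → V → Prop
  symm : ∀ {x y : V}, adj x y → adj y x
  loopless : ∀ x : V, ¬ adj x x
  fat : V → Prop
  fat_slim : ∀ x : V, fat x → ∃ y : V, adj x y ∧ ¬ fat y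
  fat_nonadj : ∀ x y : V, fat x → fat y → ¬ adj x y

/-- The smallest eigenvalue of a real matrix (the infimum of its set of real
eigenvalues); for a real symmetric matrix on a nonempty finite index type this is
the least eigenvalue. -/
noncomputable def minEig {n : Type*} [Fintype n] (M : Matrix n n ℝ) : ℝ :=
  sInf {t : ℝ | ∃ v : n → ℝ, v ≠ 0 ∧ M.mulVec v = t • v}

namespace HoffmanGraph

variable {V : Type*}

/-- The type of slim vertices. -/
abbrev Slim (H : HoffmanGraph V) : Type _ := {x : V // ¬ H.fat x}

/-- The type of fat vertices. -/
abbrev FatV (H : HoffmanGraph V) : Type _ := {x : V // H.fat x}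

noncomputable instance (priority := 50) instFintypeSlim [Finite V] {H : HoffmanGraph V} :
    Fintype H.Slim := Fintype.ofFinite _

noncomputable instance (priority := 50) instFintypeFatV [Finite V] {H : HoffmanGraph V} :
    Fintype H.FatV := Fintype.ofFinite _

/-- The set of fat neighbors `N^f(x)` of a vertex. -/
def fatNbrs (H : HoffmanGraph V) (x : V) : Set V := {f | H.fat f ∧ H.adj x f}

/-- The set of common fat neighbors `N^f(x) ∩ N^f(y)` of two vertices. -/
def commonFat (H : HoffmanGraph V) (x y : V) : Set V :=
  {f | H.fat f ∧ H.adj x f ∧ H.adj y f}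

lemma commonFat_comm (H : HoffmanGraph V) (x y : V) :
    H.commonFat x y = H.commonFat y x := by
  ext f; simp only [commonFat, Set.mem_setOf_eq]; tauto

/-- The degree of a vertex. -/
noncomputable def degree (H : HoffmanGraph V) (x : V) : ℕ := {y | H.adj x y}.ncard

/-- The matrix `B(𝔥) = A_s - C Cᵀ`, written entrywise:
`B x y = A_s x y - |N^f(x) ∩ N^f(y)|`. -/
noncomputable def B (H : HoffmanGraph V) : Matrix H.Slim H.Slim ℝ := by
  classical
  exact Matrix.of fun x y =>
    (if H.adj x.1 y.1 then (1 : ℝ) else 0) - ((H.commonFat x.1 y.1).ncard : ℝ)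

/-- `λ_min(𝔥)`: the smallest eigenvalue of `B(𝔥)`. -/
noncomputable def lamMin [Finite V] (H : HoffmanGraph V) : ℝ := minEig H.B

/-- The adjacency matrix of the slim subgraph of `𝔥` (equivalently, the `B`-matrix
of the slim subgraph regarded as a slim Hoffman graph). -/
noncomputable def slimAdjMatrix (H : HoffmanGraph V) : Matrix H.Slim H.Slim ℝ := by
  classical
  exact Matrix.of fun x y => if H.adj x.1 y.1 then (1 : ℝ) else 0

/-- A Hoffman graph is fat if every slim vertex has a fat neighbor. -/
def IsFat (H : HoffmanGraph V) : Prop :=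
  ∀ x : V, ¬ H.fat x → ∃ f : V, H.fat f ∧ H.adj x f

end HoffmanGraph

/-- An embedding exhibiting `G` as an induced Hoffman subgraph of `H`:
an injection preserving adjacency, non-adjacency, and the slim/fat labeling. -/
structure HoffmanEmbedding {V W : Type*} (G : HoffmanGraph V) (H : HoffmanGraph W) where
  toFun : V → W
  inj : Function.Injective toFun
  adj_iff : ∀ x y : V, G.adj x y ↔ H.adj (toFun x) (toFun y)
  fat_iff : ∀ x : V, G.fat x ↔ H.fat (toFun x)

/-- An isomorphism of Hoffman graphs. -/
structure HoffmanIso {V W : Type*} (G : HoffmanGraph V) (H : HoffmanGraph W) where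
  toEquiv : V ≃ W
  adj_iff : ∀ x y : V, G.adj x y ↔ H.adj (toEquiv x) (toEquiv y)
  fat_iff : ∀ x : V, G.fat x ↔ H.fat (toEquiv x)

namespace HoffmanGraph

variable {V : Type*}

/-- The induced Hoffman subgraph on a set `W` of vertices, provided every fat
vertex of `W` keeps a slim neighbor inside `W`. -/
def induce (H : HoffmanGraph V) (W : Finset V)
    (hW : ∀ y ∈ W, H.fat y → ∃ x ∈ W, ¬ H.fat x ∧ H.adj y x) :
    HoffmanGraph {v : V // v ∈ W} where
  adj x y := H.adj x.1 y.1
  symm := @fun x y h => H.symm h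
  loopless x h := H.loopless x.1 h
  fat x := H.fat x.1
  fat_slim x hx := by
    obtain ⟨z, hzW, hz1, hz2⟩ := hW x.1 x.2 hx
    exact ⟨⟨z, hzW⟩, hz2, hz1⟩
  fat_nonadj x y hx hy := H.fat_nonadj x.1 y.1 hx hy

/-- A decomposition of a Hoffman graph `H` into the family of induced Hoffman
subgraphs on the (nonempty) vertex sets `W i`. -/
structure IsDecomposition (H : HoffmanGraph V) {ι : Type*} (W : ι → Finset V) : Prop where
  nonempty : ∀ i, (W i).Nonempty
  cover : ∀ v : V, ∃ i, v ∈ W i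
  slim_disj : ∀ i j, i ≠ j → ∀ x : V, ¬ H.fat x → x ∈ W i → x ∈ W j → False
  fat_closed : ∀ i, ∀ x y : V, x ∈ W i → ¬ H.fat x → H.fat y → H.adj x y → y ∈ W i
  part_fat : ∀ i, ∀ y ∈ W i, H.fat y → ∃ x ∈ W i, ¬ H.fat x ∧ H.adj y x
  cross : ∀ i j, i ≠ j → ∀ x y : V, x ∈ W i → y ∈ W j → ¬ H.fat x → ¬ H.fat y →
    (H.commonFat x y).ncard ≤ 1 ∧ ((H.commonFat x y).ncard = 1 ↔ H.adj x y)

/-- A Hoffman graph is decomposable if it admits a decomposition into `n ≥ 2` parts. -/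
def Decomposable (H : HoffmanGraph V) : Prop :=
  ∃ n : ℕ, 2 ≤ n ∧ ∃ W : Fin n → Finset V, H.IsDecomposition W

/-- `α`-reducibility: `λ_min(H) ≥ α` and there is a Hoffman graph `H'` containing `H`
as an induced Hoffman subgraph together with a decomposition `{𝔥¹, 𝔥²}` of `H'` whose
parts have smallest eigenvalue at least `α` and whose slim vertex sets both meet the
slim vertex set of `H`. -/
def AlphaReducible [Finite V] (H : HoffmanGraph V) (α : ℝ) : Prop :=
  H.lamMin ≥ α ∧
  ∃ (V' : Type) (_ : Finite V') (H' : HoffmanGraph V') (e : HoffmanEmbedding H H')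
    (W : Fin 2 → Finset V') (hD : H'.IsDecomposition W),
    (∀ i, (H'.induce (W i) (hD.part_fat i)).lamMin ≥ α) ∧
    (∀ i, ∃ v : V, ¬ H.fat v ∧ e.toFun v ∈ W i)

/-- `α`-irreducibility: `λ_min(H) ≥ α` and `H` is not `α`-reducible. -/
def AlphaIrreducible [Finite V] (H : HoffmanGraph V) (α : ℝ) : Prop :=
  H.lamMin ≥ α ∧ ¬ H.AlphaReducible α

end HoffmanGraph

/-- An edge-signed graph: a simple graph whose edge set is partitioned into
`(+)`-edges and `(−)`-edges. -/
structure EdgeSignedGraph (V : Type*) where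
  pos : V → V → Prop
  neg : V → V → Prop
  pos_symm : ∀ {x y : V}, pos x y → pos y x
  neg_symm : ∀ {x y : V}, neg x y → neg y x
  pos_irrefl : ∀ x : V, ¬ pos x x
  neg_irrefl : ∀ x : V, ¬ neg x x
  pos_neg : ∀ x y : V, pos x y → neg x y → False

namespace EdgeSignedGraph

variable {V : Type*}

/-- The signed adjacency matrix: `1` on `(+)`-edges, `−1` on `(−)`-edges, `0` otherwise. -/
noncomputable def M (S : EdgeSignedGraph V) : Matrix V V ℝ := by
  classical
  exact Matrix.of fun x y => if S.pos x y then (1 : ℝ) else if S.neg x y then -1 else 0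

/-- The underlying simple graph of an edge-signed graph. -/
def toSimpleGraph (S : EdgeSignedGraph V) : SimpleGraph V where
  Adj x y := S.pos x y ∨ S.neg x y
  symm := ⟨fun x y h => h.elim (fun h => Or.inl (S.pos_symm h)) (fun h => Or.inr (S.neg_symm h))⟩
  loopless := ⟨fun x h => h.elim (S.pos_irrefl x) (S.neg_irrefl x)⟩

/-- `S.HasInduced T`: the edge-signed graph `S` contains an induced edge-signed
subgraph isomorphic to `T`. -/
def HasInduced {W : Type*} (S : EdgeSignedGraph V) (T : EdgeSignedGraph W) : Prop :=
  ∃ f : W → V, Function.Injective f ∧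
    (∀ x y : W, T.pos x y ↔ S.pos (f x) (f y)) ∧
    (∀ x y : W, T.neg x y ↔ S.neg (f x) (f y))

end EdgeSignedGraph

/-- An isomorphism of edge-signed graphs. -/
structure EdgeSignedIso {V W : Type*} (S : EdgeSignedGraph V) (T : EdgeSignedGraph W) where
  toEquiv : V ≃ W
  pos_iff : ∀ x y : V, S.pos x y ↔ T.pos (toEquiv x) (toEquiv y)
  neg_iff : ∀ x y : V, S.neg x y ↔ T.neg (toEquiv x) (toEquiv y)

/-- The special graph `S(𝔥)` of a Hoffman graph: the edge-signed graph on the slim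
vertices where adjacent vertices with no common fat neighbor form a `(+)`-edge, and
non-adjacent vertices with a common fat neighbor form a `(−)`-edge. -/
def HoffmanGraph.special {V : Type*} (H : HoffmanGraph V) : EdgeSignedGraph H.Slim where
  pos x y := H.adj x.1 y.1 ∧ H.commonFat x.1 y.1 = ∅
  neg x y := x ≠ y ∧ ¬ H.adj x.1 y.1 ∧ (H.commonFat x.1 y.1).Nonempty
  pos_symm := @fun x y h => ⟨H.symm h.1, by rw [H.commonFat_comm]; exact h.2⟩
  neg_symm := @fun x y h =>
    ⟨h.1.symm, fun ha => h.2.1 (H.symm ha), by rw [H.commonFat_comm]; exact h.2.2⟩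
  pos_irrefl x h := H.loopless x.1 h.1
  neg_irrefl x h := h.1 rfl
  pos_neg x y hp hn := hn.2.1 hp.1

/-- The edge-signed graph `Q_{p,q,r}`: a `(+)`-clique `V_r = Fin r`, a set
`V_p = Fin p` matched by `(+)`-edges to the first `p` vertices of `V_r`, and a set
`V_q = Fin q` matched by `(−)`-edges to the next `q` vertices of `V_r`. -/
def Q (p q r : ℕ) : EdgeSignedGraph (Fin p ⊕ Fin q ⊕ Fin r) where
  pos x y :=
    (∃ (i : Fin p) (k : Fin r), x = Sum.inl i ∧ y = Sum.inr (Sum.inr k) ∧ (k : ℕ) = (i : ℕ)) ∨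
    (∃ (i : Fin p) (k : Fin r), y = Sum.inl i ∧ x = Sum.inr (Sum.inr k) ∧ (k : ℕ) = (i : ℕ)) ∨
    (∃ (k l : Fin r), x = Sum.inr (Sum.inr k) ∧ y = Sum.inr (Sum.inr l) ∧ k ≠ l)
  neg x y :=
    (∃ (j : Fin q) (k : Fin r),
      x = Sum.inr (Sum.inl j) ∧ y = Sum.inr (Sum.inr k) ∧ (k : ℕ) = p + (j : ℕ)) ∨
    (∃ (j : Fin q) (k : Fin r),
      y = Sum.inr (Sum.inl j) ∧ x = Sum.inr (Sum.inr k) ∧ (k : ℕ) = p + (j : ℕ))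
  pos_symm := @fun x y h => by
    rcases h with ⟨i, k, h1, h2, h3⟩ | ⟨i, k, h1, h2, h3⟩ | ⟨k, l, h1, h2, h3⟩
    · exact Or.inr (Or.inl ⟨i, k, h1, h2, h3⟩)
    · exact Or.inl ⟨i, k, h1, h2, h3⟩
    · exact Or.inr (Or.inr ⟨l, k, h2, h1, h3.symm⟩)
  neg_symm := @fun x y h => by
    rcases h with ⟨j, k, h1, h2, h3⟩ | ⟨j, k, h1, h2, h3⟩
    · exact Or.inr ⟨j, k, h1, h2, h3⟩
    · exact Or.inl ⟨j, k, h1, h2, h3⟩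
  pos_irrefl x h := by
    rcases h with ⟨i, k, h1, h2, h3⟩ | ⟨i, k, h1, h2, h3⟩ | ⟨k, l, h1, h2, h3⟩ <;>
      subst h1 <;> simp_all
  neg_irrefl x h := by
    rcases h with ⟨j, k, h1, h2, h3⟩ | ⟨j, k, h1, h2, h3⟩ <;> subst h1 <;> simp_all
  pos_neg x y hp hn := by
    rcases hp with ⟨i, k, h1, h2, h3⟩ | ⟨i, k, h1, h2, h3⟩ | ⟨k, l, h1, h2, h3⟩ <;>
      rcases hn with ⟨j, m, g1, g2, g3⟩ | ⟨j, m, g1, g2, g3⟩ <;> subst h1 <;> simp_all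

/-- The edge-signed triangle `T₁` with exactly one `(+)`-edge and two `(−)`-edges. -/
def T1 : EdgeSignedGraph (Fin 3) where
  pos x y := (x = 0 ∧ y = 1) ∨ (x = 1 ∧ y = 0)
  neg x y := x ≠ y ∧ (x = 2 ∨ y = 2)
  pos_symm := @fun x y h => by tauto
  neg_symm := @fun x y h => ⟨h.1.symm, h.2.symm⟩
  pos_irrefl x h := by
    rcases h with ⟨h1, h2⟩ | ⟨h1, h2⟩ <;> subst h1 <;> exact absurd h2 (by decide)
  neg_irrefl x h := h.1 rfl
  pos_neg x y hp hn := by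
    rcases hp with ⟨h1, h2⟩ | ⟨h1, h2⟩ <;> subst h1 <;> subst h2 <;>
      exact absurd hn.2 (by decide)

/-- The golden ratio `τ = (1 + √5)/2`. -/
noncomputable def goldenRatio' : ℝ := (1 + Real.sqrt 5) / 2


section AuxSpectral

open Matrix

lemma dp_self_pos' {n : Type*} [Fintype n] {v : n → ℝ} (hv : v ≠ 0) : 0 < v ⬝ᵥ v := by
  have h0 : v ⬝ᵥ v ≠ 0 := fun h => hv (dotProduct_self_eq_zero.mp h)
  have h1 : 0 ≤ v ⬝ᵥ v := Finset.sum_nonneg fun i _ => mul_self_nonneg _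
  exact lt_of_le_of_ne h1 (Ne.symm h0)

lemma sub_smul_one_posSemidef' {n : Type*} [Fintype n] [DecidableEq n]
    {A : Matrix n n ℝ} (hA : A.IsHermitian) {μ : ℝ} (hμ : ∀ i, μ ≤ hA.eigenvalues i) :
    (A - μ • 1).PosSemidef := by
  have hU : (hA.eigenvectorUnitary : Matrix n n ℝ) * star (hA.eigenvectorUnitary : Matrix n n ℝ)
      = 1 := Matrix.mem_unitaryGroup_iff.mp hA.eigenvectorUnitary.2
  have hd : Matrix.diagonal (fun i => hA.eigenvalues i - μ)
      = Matrix.diagonal (RCLike.ofReal ∘ hA.eigenvalues) - μ • (1 : Matrix n n ℝ) := by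
    ext i j
    by_cases hij : i = j <;>
      simp [hij, Matrix.diagonal_apply, Matrix.one_apply, Matrix.sub_apply]
  have h1 : A - μ • (1 : Matrix n n ℝ) =
      (hA.eigenvectorUnitary : Matrix n n ℝ) * Matrix.diagonal (fun i => hA.eigenvalues i - μ)
        * star (hA.eigenvectorUnitary : Matrix n n ℝ) := by
    rw [hd, Matrix.mul_sub, Matrix.sub_mul, ← Unitary.conjStarAlgAut_apply (S := ℝ), ← hA.spectral_theorem]
    rw [Matrix.mul_smul, Matrix.mul_one, Matrix.smul_mul, hU]
  rw [h1, Matrix.star_eq_conjTranspose]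
  exact (Matrix.posSemidef_diagonal_iff.mpr fun i =>
    sub_nonneg.2 (hμ i)).mul_mul_conjTranspose_same _

lemma rayleigh_le' {n : Type*} [Fintype n] [DecidableEq n]
    {A : Matrix n n ℝ} (hA : A.IsHermitian) {μ : ℝ} (hμ : ∀ i, μ ≤ hA.eigenvalues i)
    (v : n → ℝ) : μ * (v ⬝ᵥ v) ≤ v ⬝ᵥ A.mulVec v := by
  have h := (sub_smul_one_posSemidef' hA hμ).dotProduct_mulVec_nonneg v
  simp only [star_trivial, Matrix.sub_mulVec, Matrix.smul_mulVec, Matrix.one_mulVec,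
    dotProduct_sub, dotProduct_smul, smul_eq_mul] at h
  linarith

lemma minEig_spec' {n : Type*} [Fintype n] [DecidableEq n] [Nonempty n]
    {A : Matrix n n ℝ} (hA : A.IsHermitian) :
    (∃ v : n → ℝ, v ≠ 0 ∧ A.mulVec v = (minEig A) • v) ∧
    ∀ v : n → ℝ, minEig A * (v ⬝ᵥ v) ≤ v ⬝ᵥ A.mulVec v := by
  obtain ⟨i₀, hi₀⟩ := Finite.exists_min hA.eigenvalues
  set μ := hA.eigenvalues i₀ with hμdef
  set E := {t : ℝ | ∃ v : n → ℝ, v ≠ 0 ∧ A.mulVec v = t • v} with hE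
  have hray : ∀ v : n → ℝ, μ * (v ⬝ᵥ v) ≤ v ⬝ᵥ A.mulVec v := rayleigh_le' hA hi₀
  have hmem : μ ∈ E := ⟨hA.eigenvectorBasis i₀, (WithLp.ofLp_eq_zero 2).not.mpr (hA.eigenvectorBasis.orthonormal.ne_zero i₀),
    hA.mulVec_eigenvectorBasis i₀⟩
  have hlb : ∀ t ∈ E, μ ≤ t := by
    rintro t ⟨v, hv, hAv⟩
    have h1 : v ⬝ᵥ A.mulVec v = t * (v ⬝ᵥ v) := by
      rw [hAv, dotProduct_smul, smul_eq_mul]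
    have h2 := hray v
    have h3 := dp_self_pos' hv
    nlinarith
  have heq : minEig A = μ :=
    le_antisymm (csInf_le ⟨μ, hlb⟩ hmem) (le_csInf ⟨μ, hmem⟩ hlb)
  rw [heq]
  exact ⟨hmem, hray⟩

end AuxSpectral

/-- If `H` is a fat Hoffman graph (with at least one slim vertex)
with `λ_min(H) > −3`, then `λ_min(S(H)) ≥ λ_min(H) + 1`. -/
theorem statement6 {V : Type*} [Fintype V] (H : HoffmanGraph V)
    (hfat : H.IsFat) (hne : Nonempty H.Slim) (h : H.lamMin > -3) :
    minEig H.special.M ≥ H.lamMin + 1 := by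
  letI : DecidableEq H.Slim := Classical.decEq _
  have hB : H.B.IsHermitian := by
    classical
    ext x y
    simp only [Matrix.conjTranspose_apply, star_trivial, HoffmanGraph.B, Matrix.of_apply]
    rw [H.commonFat_comm y.1 x.1]
    congr 1
    exact if_congr ⟨fun hh => H.symm hh, fun hh => H.symm hh⟩ rfl rfl
  have hM : H.special.M.IsHermitian := by
    classical
    ext x y
    simp only [Matrix.conjTranspose_apply, star_trivial, EdgeSignedGraph.M, Matrix.of_apply]
    exact if_congr ⟨fun hh => H.special.pos_symm hh, fun hh => H.special.pos_symm hh⟩ rfl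
      (if_congr ⟨fun hh => H.special.neg_symm hh, fun hh => H.special.neg_symm hh⟩ rfl rfl)
  have hfatnbr : ∀ x : H.Slim, 1 ≤ (H.commonFat x.1 x.1).ncard := by
    intro x
    obtain ⟨f, hf, ha⟩ := hfat x.1 x.2
    exact (Set.ncard_pos (Set.toFinite _)).mpr ⟨f, hf, ha, ha⟩
  have hBdiag : ∀ x : H.Slim, H.B x x = -((H.commonFat x.1 x.1).ncard : ℝ) := by
    intro x
    simp [HoffmanGraph.B, H.loopless x.1]
  -- Rayleigh data for B
  obtain ⟨_, hrayB⟩ := minEig_spec' hB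
  have hlam : H.lamMin = minEig H.B := rfl
  -- every common fat neighbourhood of two distinct slim vertices has at most one element
  have hc : ∀ x y : H.Slim, x ≠ y → (H.commonFat x.1 y.1).ncard ≤ 1 := by
    intro x y hxy
    by_contra hcon
    push_neg at hcon
    have hcon2 : 2 ≤ (H.commonFat x.1 y.1).ncard := hcon
    have hsubx : H.commonFat x.1 y.1 ⊆ H.commonFat x.1 x.1 := fun f hf => ⟨hf.1, hf.2.1, hf.2.1⟩
    have hsuby : H.commonFat x.1 y.1 ⊆ H.commonFat y.1 y.1 := fun f hf => ⟨hf.1, hf.2.2, hf.2.2⟩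
    have hnx : 2 ≤ (H.commonFat x.1 x.1).ncard :=
      le_trans hcon2 (Set.ncard_le_ncard hsubx (Set.toFinite _))
    have hny : 2 ≤ (H.commonFat y.1 y.1).ncard :=
      le_trans hcon2 (Set.ncard_le_ncard hsuby (Set.toFinite _))
    obtain ⟨v, hv⟩ : ∃ v : H.Slim → ℝ, v = Pi.single x 1 + Pi.single y 1 := ⟨_, rfl⟩
    have hvdot : dotProduct v v = 2 := by
      simp [hv, dotProduct_add, add_dotProduct, dotProduct_single,
        Pi.single_apply, hxy, Ne.symm hxy]
      norm_num
    have key : dotProduct v (H.B.mulVec v) = H.B x x + H.B x y + H.B y x + H.B y y := by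
      simp only [hv, Matrix.mulVec_add, dotProduct_add, add_dotProduct]
      have h1 : ∀ a b : H.Slim, dotProduct (Pi.single a (1:ℝ)) (H.B.mulVec (Pi.single b 1)) = H.B a b := by
        intro a b
        rw [Matrix.mulVec_single, single_dotProduct]
        simp
      rw [h1, h1, h1, h1]
      ring
    have hray := hrayB v
    rw [key, hvdot, ← hlam] at hray
    have h6 : (-6 : ℝ) < H.B x x + H.B x y + H.B y x + H.B y y := by nlinarith
    have e1 : H.B x x ≤ -2 := by
      rw [hBdiag x]
      have : (2:ℝ) ≤ ((H.commonFat x.1 x.1).ncard : ℝ) := by exact_mod_cast hnx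
      linarith
    have e2 : H.B y y ≤ -2 := by
      rw [hBdiag y]
      have : (2:ℝ) ≤ ((H.commonFat y.1 y.1).ncard : ℝ) := by exact_mod_cast hny
      linarith
    have hcR : (2:ℝ) ≤ ((H.commonFat x.1 y.1).ncard : ℝ) := by exact_mod_cast hcon2
    have hcR' : (2:ℝ) ≤ ((H.commonFat y.1 x.1).ncard : ℝ) := by
      rw [H.commonFat_comm y.1 x.1]; exact hcR
    have e3 : H.B x y ≤ -1 := by
      classical
      show (if H.adj x.1 y.1 then (1:ℝ) else 0) - ((H.commonFat x.1 y.1).ncard : ℝ) ≤ -1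
      split <;> linarith
    have e4 : H.B y x ≤ -1 := by
      classical
      show (if H.adj y.1 x.1 then (1:ℝ) else 0) - ((H.commonFat y.1 x.1).ncard : ℝ) ≤ -1
      split <;> linarith
    linarith
  -- the special matrix differs from B by a diagonal matrix
  obtain ⟨d, hd⟩ : ∃ d : H.Slim → ℝ, d = fun x : H.Slim => ((H.commonFat x.1 x.1).ncard : ℝ) := ⟨_, rfl⟩
  have hdiff : H.special.M - H.B = Matrix.diagonal d := by
    classical
    ext x y
    by_cases hxy : x = y
    · subst hxy
      have hMxx : H.special.M x x = 0 := by
        simp only [EdgeSignedGraph.M, Matrix.of_apply]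
        rw [if_neg, if_neg]
        · exact fun hh => hh.1 rfl
        · exact fun hh => H.loopless x.1 hh.1
      simp [Matrix.sub_apply, hMxx, hBdiag x, hd]
    · have hc1 := hc x y hxy
      have hMB : H.special.M x y = H.B x y := by
        by_cases hemp : H.commonFat x.1 y.1 = ∅
        · have hn0 : ((H.commonFat x.1 y.1).ncard : ℝ) = 0 := by rw [hemp]; simp
          by_cases hadj : H.adj x.1 y.1
          · have : H.special.pos x y := ⟨hadj, hemp⟩
            show (if H.special.pos x y then (1:ℝ) else if H.special.neg x y then -1 else 0) = _
            rw [if_pos this]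
            show (1:ℝ) = (if H.adj x.1 y.1 then (1:ℝ) else 0) - _
            rw [if_pos hadj, hn0, sub_zero]
          · have hp : ¬ H.special.pos x y := fun hh => hadj hh.1
            have hn : ¬ H.special.neg x y := fun hh => by
              rcases hh.2.2 with ⟨f, hf⟩
              rw [hemp] at hf
              exact hf
            show (if H.special.pos x y then (1:ℝ) else if H.special.neg x y then -1 else 0) = _
            rw [if_neg hp, if_neg hn]
            show (0:ℝ) = (if H.adj x.1 y.1 then (1:ℝ) else 0) - _
            rw [if_neg hadj, hn0, sub_zero]
        · have hne' : (H.commonFat x.1 y.1).Nonempty := Set.nonempty_iff_ne_empty.mpr hemp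
          have hn1 : (H.commonFat x.1 y.1).ncard = 1 :=
            le_antisymm hc1 ((Set.ncard_pos (Set.toFinite _)).mpr hne')
          have hn1R : ((H.commonFat x.1 y.1).ncard : ℝ) = 1 := by rw [hn1]; norm_num
          by_cases hadj : H.adj x.1 y.1
          · have hp : ¬ H.special.pos x y := fun hh => hemp hh.2
            have hn : ¬ H.special.neg x y := fun hh => hh.2.1 hadj
            show (if H.special.pos x y then (1:ℝ) else if H.special.neg x y then -1 else 0) = _
            rw [if_neg hp, if_neg hn]
            show (0:ℝ) = (if H.adj x.1 y.1 then (1:ℝ) else 0) - _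
            rw [if_pos hadj, hn1R]
            norm_num
          · have hp : ¬ H.special.pos x y := fun hh => hadj hh.1
            have hn : H.special.neg x y := ⟨hxy, hadj, hne'⟩
            show (if H.special.pos x y then (1:ℝ) else if H.special.neg x y then -1 else 0) = _
            rw [if_neg hp, if_pos hn]
            show (-1:ℝ) = (if H.adj x.1 y.1 then (1:ℝ) else 0) - _
            rw [if_neg hadj, hn1R]
            norm_num
      simp [Matrix.sub_apply, hMB, Matrix.diagonal_apply_ne _ hxy]
  have hMeq : H.special.M = H.B + Matrix.diagonal d := by
    rw [← hdiff]
    abel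
  -- conclude
  obtain ⟨hMmem, _⟩ := minEig_spec' hM
  rw [ge_iff_le]
  refine le_csInf ⟨minEig H.special.M, ?_⟩ ?_
  · exact hMmem
  rintro t ⟨v, hv0, hMv⟩
  have hvv := dp_self_pos' hv0
  have h1 : dotProduct v (H.special.M.mulVec v) = t * (dotProduct v v) := by
    rw [hMv, dotProduct_smul, smul_eq_mul]
  have h2 : dotProduct v (H.special.M.mulVec v)
      = dotProduct v (H.B.mulVec v) + dotProduct v ((Matrix.diagonal d).mulVec v) := by
    rw [hMeq, Matrix.add_mulVec, dotProduct_add]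
  have h3 : dotProduct v v ≤ dotProduct v ((Matrix.diagonal d).mulVec v) := by
    unfold dotProduct
    refine Finset.sum_le_sum fun i _ => ?_
    rw [Matrix.mulVec_diagonal]
    have hd1 : (1:ℝ) ≤ d i := by
      have := hfatnbr i
      simp only [hd]
      exact_mod_cast this
    nlinarith [mul_self_nonneg (v i)]
  have h4 := hrayB v
  rw [← hlam] at h4
  nlinarith
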